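/- Let q be a nonzero complex number that is not a root of unity, with a fixed square root q^{1/2}, and let α : ℤ → ℂ have finite support. Define F(L) := Σ_{a ∈ ℤ} α(a) { T_{-1}(L, a; q) + T_{-1}(L, a+1; q) } for nonnegative integers L. Then for every nonnegative integer L, Σ_{i≥0} q^{C(i+1,2)} [L choose i]_q F(i) = Σ_{a ∈ ℤ} α(a) q^{C(a+1,2)} [2L+1 choose L-a]_q, where C(a,2) = a(a-1)/2 denotes the binomial coefficient. -/

import Mathlib

/-- The finite q-Pochhammer symbol `(a;q)_n`. -/
noncomputable def qPoch (a q : ℂ) (n : ℕ) : ℂ :=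
  ∏ j ∈ Finset.range n, (1 - a * q ^ j)

/-- The infinite q-Pochhammer symbol `(a;q)_∞`. -/
noncomputable def qPochInf (a q : ℂ) : ℂ :=
  ∏' j : ℕ, (1 - a * q ^ j)

/-- `1/(q;q)_n` for an integer `n`, with the convention that it is `0` for `n < 0`. -/
noncomputable def qPochInvZ (q : ℂ) (n : ℤ) : ℂ :=
  if 0 ≤ n then (qPoch q q n.toNat)⁻¹ else 0

/-- The q-trinomial coefficient `(L, b; a; q)_2`. -/
noncomputable def qTrinomial (L : ℕ) (b a : ℤ) (q : ℂ) : ℂ :=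
  ∑' n : ℕ, q ^ ((n : ℤ) * ((n : ℤ) + b)) * qPoch q q L * qPochInvZ q (n : ℤ) *
    qPochInvZ q ((n : ℤ) + a) * qPochInvZ q ((L : ℤ) - 2 * (n : ℤ) - a)

/-- The q-trinomial coefficient `T_n(L, a; q)`, where `s` is a fixed square root of `q`. -/
noncomputable def qTriT (n : ℤ) (L : ℕ) (a : ℤ) (q s : ℂ) : ℂ :=
  s ^ ((L : ℤ) * ((L : ℤ) - n) - a * (a - n)) * qTrinomial L (a - n) a q⁻¹

/-- The Gaussian (q-binomial) coefficient `[N choose k]_q`, zero unless `0 ≤ k ≤ N`. -/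
noncomputable def qBinom (N k : ℤ) (q : ℂ) : ℂ :=
  if 0 ≤ k ∧ k ≤ N then
    qPoch q q N.toNat * (qPoch q q k.toNat)⁻¹ * (qPoch q q (N - k).toNat)⁻¹
  else 0

/-- The quadratic form `Q(m,n) = 2m² + 6mn + 6n²` from Capparelli's theorems. -/
def Qcap (m n : ℕ) : ℕ := 2 * m ^ 2 + 6 * m * n + 6 * n ^ 2

section Work
variable {q s : ℂ}

lemma qPoch_succ' (a : ℂ) (n : ℕ) : qPoch a q (n+1) = qPoch a q n * (1 - a * q ^ n) :=
  Finset.prod_range_succ _ _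

lemma qP_ne (hroot : ∀ k : ℕ, 0 < k → q ^ k ≠ 1) (n : ℕ) : qPoch q q n ≠ 0 := by
  induction n with
  | zero => simp [qPoch]
  | succ m ih =>
    rw [qPoch_succ']
    refine mul_ne_zero ih ?_
    intro h
    have : q ^ (m+1) = 1 := by
      have h2 := sub_eq_zero.mp h
      rw [pow_succ']
      exact h2.symm
    exact hroot (m+1) (Nat.succ_pos m) this

lemma qBinom_eq_zero {N k : ℤ} (h : ¬(0 ≤ k ∧ k ≤ N)) : qBinom N k q = 0 := if_neg h

lemma qBinom_nat (n k : ℕ) (h : k ≤ n) :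
    qBinom (n : ℤ) (k : ℤ) q = qPoch q q n * (qPoch q q k)⁻¹ * (qPoch q q (n - k))⁻¹ := by
  unfold qBinom
  rw [if_pos ⟨Int.natCast_nonneg k, by exact_mod_cast h⟩]
  have h1 : ((n : ℤ) - k).toNat = n - k := by omega
  rw [h1, Int.toNat_natCast, Int.toNat_natCast]

lemma qBinom_zero_right (hroot : ∀ k : ℕ, 0 < k → q ^ k ≠ 1) (n : ℕ) :
    qBinom (n : ℤ) 0 q = 1 := by
  have h := qBinom_nat (q := q) n 0 (Nat.zero_le n)
  have h0 : qPoch q q 0 = 1 := by simp [qPoch]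
  rw [show ((0:ℕ):ℤ) = (0:ℤ) by norm_num] at h
  rw [h, h0, Nat.sub_zero]
  rw [inv_one, mul_one, mul_inv_cancel₀ (qP_ne hroot n)]

lemma qBinom_self (hroot : ∀ k : ℕ, 0 < k → q ^ k ≠ 1) (n : ℕ) :
    qBinom (n : ℤ) (n : ℤ) q = 1 := by
  have h := qBinom_nat (q := q) n n le_rfl
  have h0 : qPoch q q 0 = 1 := by simp [qPoch]
  rw [h, Nat.sub_self, h0, inv_one, mul_inv_cancel₀ (qP_ne hroot n), one_mul]

lemma qBinom_zero_top (m : ℤ) : qBinom 0 m q = if m = 0 then 1 else 0 := by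
  by_cases h : m = 0
  · subst h
    simp [qBinom, qPoch]
  · rw [qBinom_eq_zero (by omega), if_neg h]

lemma qBinom_symm (n : ℕ) (k : ℤ) : qBinom (n : ℤ) k q = qBinom (n : ℤ) ((n : ℤ) - k) q := by
  by_cases h : 0 ≤ k ∧ k ≤ (n : ℤ)
  · obtain ⟨j, rfl⟩ : ∃ j : ℕ, k = (j : ℤ) := ⟨k.toNat, by omega⟩
    have hj : j ≤ n := by exact_mod_cast h.2
    have h2 : (n : ℤ) - j = ((n - j : ℕ) : ℤ) := by omega
    rw [h2, qBinom_nat n j hj, qBinom_nat n (n - j) (Nat.sub_le n j)]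
    rw [Nat.sub_sub_self hj]
    ring
  · rw [qBinom_eq_zero h, qBinom_eq_zero (by omega)]

lemma qBinom_pascal1 (hq : q ≠ 0) (hroot : ∀ k : ℕ, 0 < k → q ^ k ≠ 1) (N : ℕ) (k : ℤ) :
    qBinom ((N : ℤ) + 1) k q
      = qBinom (N : ℤ) k q + q ^ ((N : ℤ) + 1 - k) * qBinom (N : ℤ) (k - 1) q := by
  by_cases h0 : 0 ≤ k ∧ k ≤ (N : ℤ) + 1
  · rcases eq_or_lt_of_le h0.1 with hk0 | hk0
    · -- k = 0
      rw [← hk0]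
      have h1 : ((N : ℤ) + 1) = ((N + 1 : ℕ) : ℤ) := by push_cast; ring
      rw [h1, qBinom_zero_right hroot, qBinom_zero_right hroot,
        qBinom_eq_zero (N := (N : ℤ)) (k := (0 : ℤ) - 1) (by omega)]
      ring
    · rcases eq_or_lt_of_le h0.2 with hkN | hkN
      · -- k = N + 1
        rw [hkN]
        have h1 : ((N : ℤ) + 1) = ((N + 1 : ℕ) : ℤ) := by push_cast; ring
        rw [h1, qBinom_self hroot, qBinom_eq_zero (by omega)]
        rw [show ((N+1:ℕ):ℤ) - ((N+1:ℕ):ℤ) = 0 by ring,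
          show ((N+1:ℕ):ℤ) - 1 = (N:ℤ) by push_cast; ring, qBinom_self hroot, zpow_zero]
        ring
      · -- 1 ≤ k ≤ N
        obtain ⟨j, rfl⟩ : ∃ j : ℕ, k = (j : ℤ) + 1 := ⟨(k - 1).toNat, by omega⟩
        obtain ⟨d, hd⟩ : ∃ d : ℕ, N = j + 1 + d := ⟨N - (j + 1), by omega⟩
        subst hd
        have e1 : ((j + 1 + d : ℕ) : ℤ) + 1 = ((j + 1 + d + 1 : ℕ) : ℤ) := by push_cast; ring
        have e2 : (j : ℤ) + 1 = ((j + 1 : ℕ) : ℤ) := by push_cast; ring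
        rw [e1, e2]
        rw [show ((j+1+d+1 : ℕ):ℤ) - ((j+1:ℕ):ℤ) = ((d+1:ℕ):ℤ) by push_cast; ring,
          zpow_natCast]
        rw [show ((j+1:ℕ):ℤ) - 1 = ((j:ℕ):ℤ) by push_cast; ring]
        rw [qBinom_nat (j+1+d+1) (j+1) (by omega), qBinom_nat (j+1+d) (j+1) (by omega),
          qBinom_nat (j+1+d) j (by omega)]
        have f1 : j + 1 + d + 1 - (j + 1) = d + 1 := by omega
        have f2 : j + 1 + d - (j + 1) = d := by omega
        have f3 : j + 1 + d - j = d + 1 := by omega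
        rw [f1, f2, f3]
        have p1 : qPoch q q (j+1+d+1) = qPoch q q (j+1+d) * (1 - q * q ^ (j+1+d)) :=
          qPoch_succ' q _
        have p2 : qPoch q q (j+1) = qPoch q q j * (1 - q * q ^ j) := qPoch_succ' q _
        have p3 : qPoch q q (d+1) = qPoch q q d * (1 - q * q ^ d) := qPoch_succ' q _
        rw [p1, p2, p3]
        have n1 := qP_ne hroot (j+1+d)
        have n2 := qP_ne hroot j
        have n3 := qP_ne hroot d
        have n4 : (1 : ℂ) - q * q ^ j ≠ 0 := by
          have := qP_ne hroot (j+1); rw [qPoch_succ'] at this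
          exact right_ne_zero_of_mul this
        have n5 : (1 : ℂ) - q * q ^ d ≠ 0 := by
          have := qP_ne hroot (d+1); rw [qPoch_succ'] at this
          exact right_ne_zero_of_mul this
        field_simp
        ring
  · rw [qBinom_eq_zero (by omega), qBinom_eq_zero (by omega),
      qBinom_eq_zero (N := (N : ℤ)) (k := k - 1) (by omega)]
    ring

lemma qBinom_pascal2 (hq : q ≠ 0) (hroot : ∀ k : ℕ, 0 < k → q ^ k ≠ 1) (N : ℕ) (k : ℤ) :
    qBinom ((N : ℤ) + 1) k q
      = q ^ k * qBinom (N : ℤ) k q + qBinom (N : ℤ) (k - 1) q := by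
  by_cases h0 : 0 ≤ k ∧ k ≤ (N : ℤ) + 1
  · rcases eq_or_lt_of_le h0.1 with hk0 | hk0
    · rw [← hk0]
      have h1 : ((N : ℤ) + 1) = ((N + 1 : ℕ) : ℤ) := by push_cast; ring
      rw [h1, qBinom_zero_right hroot, qBinom_zero_right hroot,
        qBinom_eq_zero (N := (N : ℤ)) (k := (0 : ℤ) - 1) (by omega)]
      simp
    · rcases eq_or_lt_of_le h0.2 with hkN | hkN
      · rw [hkN]
        have h1 : ((N : ℤ) + 1) = ((N + 1 : ℕ) : ℤ) := by push_cast; ring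
        rw [h1, qBinom_self hroot, qBinom_eq_zero (by omega)]
        rw [show ((N+1:ℕ):ℤ) - 1 = (N:ℤ) by push_cast; ring, qBinom_self hroot]
        ring
      · obtain ⟨j, rfl⟩ : ∃ j : ℕ, k = (j : ℤ) + 1 := ⟨(k - 1).toNat, by omega⟩
        obtain ⟨d, hd⟩ : ∃ d : ℕ, N = j + 1 + d := ⟨N - (j + 1), by omega⟩
        subst hd
        have e1 : ((j + 1 + d : ℕ) : ℤ) + 1 = ((j + 1 + d + 1 : ℕ) : ℤ) := by push_cast; ring
        have e2 : (j : ℤ) + 1 = ((j + 1 : ℕ) : ℤ) := by push_cast; ring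
        rw [e1, e2, zpow_natCast]
        rw [show ((j+1:ℕ):ℤ) - 1 = ((j:ℕ):ℤ) by push_cast; ring]
        rw [qBinom_nat (j+1+d+1) (j+1) (by omega), qBinom_nat (j+1+d) (j+1) (by omega),
          qBinom_nat (j+1+d) j (by omega)]
        have f1 : j + 1 + d + 1 - (j + 1) = d + 1 := by omega
        have f2 : j + 1 + d - (j + 1) = d := by omega
        have f3 : j + 1 + d - j = d + 1 := by omega
        rw [f1, f2, f3]
        rw [qPoch_succ' (q := q) q (j+1+d), qPoch_succ' (q := q) q j, qPoch_succ' (q := q) q d]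
        have n1 := qP_ne hroot (j+1+d)
        have n2 := qP_ne hroot j
        have n3 := qP_ne hroot d
        have n4 : (1 : ℂ) - q * q ^ j ≠ 0 := by
          have := qP_ne hroot (j+1); rw [qPoch_succ'] at this
          exact right_ne_zero_of_mul this
        have n5 : (1 : ℂ) - q * q ^ d ≠ 0 := by
          have := qP_ne hroot (d+1); rw [qPoch_succ'] at this
          exact right_ne_zero_of_mul this
        field_simp
        ring
  · rw [qBinom_eq_zero (by omega), qBinom_eq_zero (by omega),
      qBinom_eq_zero (N := (N : ℤ)) (k := k - 1) (by omega)]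
    ring

/-- `[L,i][i,n] = [L,n][L-n,i-n]`. -/
lemma qBinom_split (hroot : ∀ k : ℕ, 0 < k → q ^ k ≠ 1) (L : ℕ) (i n : ℤ) :
    qBinom (L : ℤ) i q * qBinom i n q
      = qBinom (L : ℤ) n q * qBinom ((L : ℤ) - n) (i - n) q := by
  by_cases h : 0 ≤ n ∧ n ≤ i ∧ i ≤ (L : ℤ)
  · obtain ⟨n0, rfl⟩ : ∃ n0 : ℕ, n = (n0 : ℤ) := ⟨n.toNat, by omega⟩
    obtain ⟨a0, ha⟩ : ∃ a0 : ℕ, i = (n0 : ℤ) + a0 := ⟨(i - n0).toNat, by omega⟩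
    obtain ⟨c0, hc⟩ : ∃ c0 : ℕ, L = n0 + a0 + c0 := ⟨L - (n0 + a0), by omega⟩
    subst ha; subst hc
    rw [show ((n0:ℤ) + a0) = ((n0 + a0 : ℕ) : ℤ) by push_cast; ring]
    rw [show ((n0 + a0 + c0 : ℕ) : ℤ) - (n0 : ℤ) = ((a0 + c0 : ℕ) : ℤ) by push_cast; ring]
    rw [show ((n0 + a0 : ℕ) : ℤ) - (n0 : ℤ) = ((a0 : ℕ) : ℤ) by push_cast; ring]
    rw [qBinom_nat (n0+a0+c0) (n0+a0) (by omega), qBinom_nat (n0+a0) n0 (by omega),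
      qBinom_nat (n0+a0+c0) n0 (by omega), qBinom_nat (a0+c0) a0 (by omega)]
    rw [show n0 + a0 + c0 - (n0 + a0) = c0 by omega, show n0 + a0 - n0 = a0 by omega,
      show n0 + a0 + c0 - n0 = a0 + c0 by omega, show a0 + c0 - a0 = c0 by omega]
    have n1 := qP_ne hroot (a0 + c0)
    field_simp
    rw [div_eq_div_iff
      (mul_ne_zero (mul_ne_zero (mul_ne_zero (qP_ne hroot (n0+a0)) (qP_ne hroot c0))
        (qP_ne hroot n0)) (qP_ne hroot a0))
      (mul_ne_zero (mul_ne_zero (qP_ne hroot c0) (qP_ne hroot n0)) (qP_ne hroot a0))]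
    ring
  · -- one side of each product is zero
    push_neg at h
    by_cases h1 : 0 ≤ n
    · by_cases h2 : n ≤ i
      · have h3 := h h1 h2
        rw [qBinom_eq_zero (N := (L : ℤ)) (k := i) (by omega),
          qBinom_eq_zero (N := (L : ℤ) - n) (k := i - n) (by omega)]
        ring
      · rw [qBinom_eq_zero (N := i) (k := n) (by omega),
          qBinom_eq_zero (N := (L : ℤ) - n) (k := i - n) (by omega)]
        ring
    · rw [qBinom_eq_zero (N := i) (k := n) (by omega),
        qBinom_eq_zero (N := (L : ℤ)) (k := n) (by omega)]
      ring

/-- `[L,n][L-n,m] = [L,m][L-m,n]`. -/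
lemma qBinom_split2 (hroot : ∀ k : ℕ, 0 < k → q ^ k ≠ 1) (L : ℕ) (n m : ℤ) :
    qBinom (L : ℤ) n q * qBinom ((L : ℤ) - n) m q
      = qBinom (L : ℤ) m q * qBinom ((L : ℤ) - m) n q := by
  by_cases h : 0 ≤ n ∧ 0 ≤ m ∧ n + m ≤ (L : ℤ)
  · obtain ⟨n0, rfl⟩ : ∃ n0 : ℕ, n = (n0 : ℤ) := ⟨n.toNat, by omega⟩
    obtain ⟨m0, rfl⟩ : ∃ m0 : ℕ, m = (m0 : ℤ) := ⟨m.toNat, by omega⟩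
    obtain ⟨c0, hc⟩ : ∃ c0 : ℕ, L = n0 + m0 + c0 := ⟨L - (n0 + m0), by omega⟩
    subst hc
    rw [show ((n0 + m0 + c0 : ℕ) : ℤ) - (n0 : ℤ) = ((m0 + c0 : ℕ) : ℤ) by push_cast; ring]
    rw [show ((n0 + m0 + c0 : ℕ) : ℤ) - (m0 : ℤ) = ((n0 + c0 : ℕ) : ℤ) by push_cast; ring]
    rw [qBinom_nat (n0+m0+c0) n0 (by omega), qBinom_nat (m0+c0) m0 (by omega),
      qBinom_nat (n0+m0+c0) m0 (by omega), qBinom_nat (n0+c0) n0 (by omega)]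
    rw [show n0 + m0 + c0 - n0 = m0 + c0 by omega, show m0 + c0 - m0 = c0 by omega,
      show n0 + m0 + c0 - m0 = n0 + c0 by omega, show n0 + c0 - n0 = c0 by omega]
    have n1 := qP_ne hroot (m0 + c0)
    have n2 := qP_ne hroot (n0 + c0)
    field_simp
  · push_neg at h
    by_cases h1 : 0 ≤ n
    · by_cases h2 : 0 ≤ m
      · have h3 := h h1 h2
        rw [qBinom_eq_zero (N := (L : ℤ) - n) (k := m) (by omega),
          qBinom_eq_zero (N := (L : ℤ) - m) (k := n) (by omega)]
        ring
      · rw [qBinom_eq_zero (N := (L : ℤ) - n) (k := m) (by omega),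
          qBinom_eq_zero (N := (L : ℤ)) (k := m) (by omega)]
        ring
    · rw [qBinom_eq_zero (N := (L : ℤ)) (k := n) (by omega),
        qBinom_eq_zero (N := (L : ℤ) - m) (k := n) (by omega)]
      ring

/-- q-Vandermonde. -/
lemma qVandermonde (hq : q ≠ 0) (hroot : ∀ k : ℕ, 0 < k → q ^ k ≠ 1) (A B : ℕ) (r : ℤ) :
    qBinom ((A : ℤ) + (B : ℤ)) r q
      = ∑ k ∈ Finset.range (A+1),
          q ^ ((k : ℤ) * ((B : ℤ) - r + k)) * qBinom (A : ℤ) (k : ℤ) q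
            * qBinom (B : ℤ) (r - k) q := by
  induction B generalizing r with
  | zero =>
    simp only [Nat.cast_zero]
    by_cases hr : 0 ≤ r ∧ r ≤ (A : ℤ)
    · rw [Finset.sum_eq_single r.toNat]
      · rw [show ((r.toNat : ℕ) : ℤ) = r by omega, show r - r = 0 by ring,
          qBinom_zero_top, if_pos rfl, show r * ((0 : ℤ) - r + r) = 0 by ring,
          zpow_zero, add_zero]
        ring
      · intro k hk hne
        rw [qBinom_zero_top, if_neg (by omega), mul_zero]
      · intro habs
        exact absurd (Finset.mem_range.mpr (by omega)) habs
    · rw [qBinom_eq_zero (by omega)]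
      refine (Finset.sum_eq_zero ?_).symm
      intro k hk
      by_cases hrk : r - (k : ℤ) = 0
      · rw [show (k : ℤ) = r by omega] at *
        rw [qBinom_eq_zero (N := (A : ℤ)) (k := r) (by omega)]
        ring
      · rw [qBinom_zero_top, if_neg hrk]
        ring
  | succ B ih =>
    have cast1 : (A : ℤ) + ((B+1 : ℕ) : ℤ) = ((A + B : ℕ) : ℤ) + 1 := by push_cast; ring
    rw [cast1, qBinom_pascal2 hq hroot (A+B) r,
      show ((A + B : ℕ) : ℤ) = (A : ℤ) + (B : ℤ) by push_cast; ring, ih r, ih (r-1)]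
    rw [Finset.mul_sum, ← Finset.sum_add_distrib]
    refine Finset.sum_congr rfl ?_
    intro k _
    rw [show ((B+1 : ℕ) : ℤ) = (B : ℤ) + 1 by push_cast; ring,
      qBinom_pascal2 hq hroot B (r - k)]
    have e1 : q ^ ((k:ℤ) * ((B:ℤ) + 1 - r + k)) * (q ^ (r - (k:ℤ)))
        = q ^ r * q ^ ((k:ℤ) * ((B:ℤ) - r + k)) := by
      rw [← zpow_add₀ hq, ← zpow_add₀ hq,
        show (k:ℤ) * ((B:ℤ) + 1 - r + k) + (r - k) = r + (k:ℤ) * ((B:ℤ) - r + k) by ring]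
    have e2 : ((k:ℤ) * ((B:ℤ) - (r - 1) + k)) = ((k:ℤ) * ((B:ℤ) + 1 - r + k)) := by ring
    have e3 : r - 1 - (k:ℤ) = r - k - 1 := by ring
    rw [e2, e3]
    linear_combination (-(qBinom (A:ℤ) (k:ℤ) q * qBinom (B:ℤ) (r - k) q)) * e1

lemma range_sum_eq_finsum (f : ℤ → ℂ) (N : ℕ) (h : ∀ k : ℤ, f k ≠ 0 → 0 ≤ k ∧ k < N) :
    ∑ i ∈ Finset.range N, f (i : ℤ) = ∑ᶠ k : ℤ, f k := by
  rw [finsum_eq_finset_sum_of_support_subset f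
    (s := (Finset.range N).map ⟨(Nat.cast : ℕ → ℤ), Nat.cast_injective⟩) ?_]
  · rw [Finset.sum_map]
    rfl
  · intro x hx
    have hb := h x hx
    simp only [Finset.coe_map, Set.mem_image, Finset.mem_coe, Finset.mem_range]
    exact ⟨x.toNat, by simpa using ⟨by omega, by omega⟩⟩

lemma sum_shift (f : ℤ → ℂ) (c : ℤ) (N M : ℕ)
    (h1 : ∀ k : ℤ, f k ≠ 0 → 0 ≤ k + c ∧ k + c < N)
    (h2 : ∀ k : ℤ, f k ≠ 0 → 0 ≤ k ∧ k < M) :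
    ∑ i ∈ Finset.range N, f ((i : ℤ) - c) = ∑ j ∈ Finset.range M, f (j : ℤ) := by
  rw [range_sum_eq_finsum (fun k => f (k - c)) N ?_, range_sum_eq_finsum f M h2]
  · exact finsum_comp (fun k : ℤ => k - c) (Equiv.subRight c).bijective
  · intro k hk
    have := h1 _ hk
    omega

lemma sum_range_zero_ext {f : ℕ → ℂ} {N M : ℕ} (h : N ≤ M) (hv : ∀ i, N ≤ i → f i = 0) :
    ∑ i ∈ Finset.range M, f i = ∑ i ∈ Finset.range N, f i :=
  (Finset.sum_subset (Finset.range_subset_range.mpr h)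
    (fun i _ hi => hv i (by simpa using hi))).symm

lemma q_zpow_eq (hs : s ^ 2 = q) (e : ℤ) : q ^ e = s ^ (2 * e) := by
  rw [← hs, ← zpow_natCast s 2, ← zpow_mul]
  norm_num

lemma qPoch_qinv (hq : q ≠ 0) (hs : s ^ 2 = q) (m : ℕ) :
    qPoch q⁻¹ q⁻¹ m = (-1) ^ m * s ^ (-((m : ℤ) * ((m : ℤ) + 1))) * qPoch q q m := by
  have hs0 : s ≠ 0 := by
    intro h; rw [h] at hs; simp at hs; exact hq hs.symm
  induction m with
  | zero => simp [qPoch]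
  | succ m ih =>
    rw [qPoch_succ', ih, qPoch_succ' (q := q)]
    have hx : q ^ (m + 1) ≠ 0 := pow_ne_zero _ hq
    have key : (1 : ℂ) - q⁻¹ * (q⁻¹) ^ m = -(q ^ (m+1))⁻¹ * (1 - q ^ (m+1)) := by
      rw [← inv_pow, ← pow_succ']
      field_simp
      rw [one_div, inv_pow, mul_sub, mul_one, inv_mul_cancel₀ hx]
      ring
    have key2 : (q ^ (m+1))⁻¹ = s ^ (-(2 * ((m : ℤ) + 1))) := by
      rw [← zpow_natCast q (m+1), q_zpow_eq hs ((m+1 : ℕ) : ℤ), ← zpow_neg,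
        show (-(2 * (((m+1):ℕ) : ℤ))) = (-(2 * ((m : ℤ) + 1))) by push_cast; ring]
    rw [key, key2]
    have merge : s ^ (-((m:ℤ) * ((m:ℤ)+1))) * s ^ (-(2 * ((m:ℤ) + 1)))
        = s ^ (-(((m:ℕ)+1 : ℤ) * (((m:ℕ):ℤ)+1+1))) := by
      rw [← zpow_add₀ hs0]
      congr 1
      ring
    calc (-1:ℂ) ^ m * s ^ (-((m:ℤ) * ((m:ℤ)+1))) * qPoch q q m
          * (-(s ^ (-(2 * ((m:ℤ) + 1)))) * (1 - q ^ (m+1)))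
        = ((-1:ℂ) ^ m * (-1)) * (s ^ (-((m:ℤ) * ((m:ℤ)+1))) * s ^ (-(2 * ((m:ℤ) + 1))))
          * (qPoch q q m * (1 - q * q ^ m)) := by rw [pow_succ']; ring
      _ = (-1) ^ (m+1) * s ^ (-(((m:ℕ)+1 : ℤ) * (((m:ℕ):ℤ)+1+1)))
          * (qPoch q q m * (1 - q * q ^ m)) := by
        rw [merge, pow_succ]
      _ = _ := by
        rw [← qPoch_succ']
        push_cast
        ring_nf


lemma neg_one_pow_inv (n : ℕ) : ((-1 : ℂ) ^ n)⁻¹ = (-1 : ℂ) ^ n := by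
  rw [← inv_pow]
  norm_num

lemma triT_expand (hq : q ≠ 0) (hs : s ^ 2 = q)
    (hroot : ∀ k : ℕ, 0 < k → q ^ k ≠ 1) (L : ℕ) (a : ℤ) :
    qTriT (-1) L a q s = ∑ n ∈ Finset.range (L+1),
      s ^ (((L:ℤ) - 2*n - a) * ((L:ℤ) - 2*n - a + 1)) * qBinom (L:ℤ) (n:ℤ) q
        * qBinom ((L:ℤ) - n) ((n:ℤ) + a) q := by
  have hs0 : s ≠ 0 := by
    intro h; rw [h] at hs; simp at hs; exact hq hs.symm
  unfold qTriT qTrinomial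
  simp only [sub_neg_eq_add]
  have hvan : ∀ b ∉ Finset.range (L+1),
      q⁻¹ ^ ((b:ℤ) * ((b:ℤ) + (a + 1))) * qPoch q⁻¹ q⁻¹ L * qPochInvZ q⁻¹ (b:ℤ) *
        qPochInvZ q⁻¹ ((b:ℤ) + a) * qPochInvZ q⁻¹ ((L:ℤ) - 2*(b:ℤ) - a) = 0 := by
    intro n hn
    have hn' : L + 1 ≤ n := by simpa using hn
    by_cases hna : 0 ≤ (n:ℤ) + a
    · have h2 : ¬ (0 ≤ (L:ℤ) - 2*(n:ℤ) - a) := by omega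
      simp only [qPochInvZ]
      rw [if_neg h2]
      ring
    · simp only [qPochInvZ]
      rw [if_neg hna]
      ring
  rw [tsum_eq_sum hvan, Finset.mul_sum]
  refine Finset.sum_congr rfl ?_
  intro n hn
  have hnL : n ≤ L := by
    have := Finset.mem_range.mp hn
    omega
  by_cases hna : 0 ≤ (n:ℤ) + a
  · by_cases hu : 0 ≤ (L:ℤ) - 2*(n:ℤ) - a
    · obtain ⟨b, hb⟩ : ∃ b : ℕ, (n:ℤ) + a = (b:ℤ) := ⟨((n:ℤ)+a).toNat, by omega⟩
      obtain ⟨w, hw⟩ : ∃ w : ℕ, (L:ℤ) - 2*n - a = (w:ℤ) := ⟨((L:ℤ)-2*n-a).toNat, by omega⟩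
      have hbw : n + b + w = L := by omega
      simp only [qPochInvZ]
      rw [hb, hw, if_pos (Int.natCast_nonneg n), if_pos (Int.natCast_nonneg b),
        if_pos (Int.natCast_nonneg w)]
      simp only [Int.toNat_natCast]
      rw [qPoch_qinv hq hs L, qPoch_qinv hq hs n, qPoch_qinv hq hs b, qPoch_qinv hq hs w]
      rw [qBinom_nat L n hnL, show (L:ℤ) - (n:ℤ) = ((b + w : ℕ) : ℤ) by omega,
        qBinom_nat (b+w) b (Nat.le_add_right b w), show L - n = b + w by omega,
        show b + w - b = w by omega]
      simp only [mul_inv, neg_one_pow_inv, ← zpow_neg, inv_zpow, neg_neg]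
      rw [q_zpow_eq hs]
      trans ((((((s ^ ((L:ℤ) * ((L:ℤ) + 1) - a * (a + 1)) * s ^ (2 * -((n:ℤ) * ((n:ℤ) + (a + 1)))))
            * s ^ (-((L:ℤ) * ((L:ℤ) + 1)))) * s ^ ((n:ℤ) * ((n:ℤ) + 1)))
            * s ^ ((b:ℤ) * ((b:ℤ) + 1))) * s ^ ((w:ℤ) * ((w:ℤ) + 1)))
          * ((((-1:ℂ) ^ L * (-1:ℂ) ^ n) * (-1:ℂ) ^ b) * (-1:ℂ) ^ w)
          * (qPoch q q L * (qPoch q q n)⁻¹ * (qPoch q q b)⁻¹ * (qPoch q q w)⁻¹))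
      · ring
      · simp only [← zpow_add₀ hs0, ← pow_add]
        rw [show L + n + b + w = 2 * L by omega, pow_mul]
        rw [show ((L:ℤ) * ((L:ℤ) + 1) - a * (a + 1) + 2 * -((n:ℤ) * ((n:ℤ) + (a + 1)))
              + -((L:ℤ) * ((L:ℤ) + 1)) + (n:ℤ) * ((n:ℤ) + 1) + (b:ℤ) * ((b:ℤ) + 1)
              + (w:ℤ) * ((w:ℤ) + 1)) = (w:ℤ) * ((w:ℤ) + 1) by
          rw [show a = (b:ℤ) - (n:ℤ) by omega, show (L:ℤ) = (n:ℤ)+(b:ℤ)+(w:ℤ) by omega]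
          ring]
        norm_num
        have hc : qPoch q q (b+w) ≠ 0 := qP_ne hroot _
        field_simp
    · simp only [qPochInvZ]
      rw [if_neg hu, qBinom_eq_zero (N := (L:ℤ) - n) (k := (n:ℤ) + a) (by omega)]
      ring
  · simp only [qPochInvZ]
    rw [if_neg hna, qBinom_eq_zero (N := (L:ℤ) - n) (k := (n:ℤ) + a) (by omega)]
    ring

lemma tau_expand (hq : q ≠ 0) (hs : s ^ 2 = q)
    (hroot : ∀ k : ℕ, 0 < k → q ^ k ≠ 1) (L : ℕ) (a : ℤ) :
    qTriT (-1) L a q s + qTriT (-1) L (a + 1) q s = ∑ n ∈ Finset.range (L+1),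
      s ^ (((L:ℤ) - 2*n - a) * ((L:ℤ) - 2*n - a - 1)) * qBinom (L:ℤ) (n:ℤ) q
        * qBinom ((L:ℤ) - n + 1) ((n:ℤ) + a + 1) q := by
  have hs0 : s ≠ 0 := by
    intro h; rw [h] at hs; simp at hs; exact hq hs.symm
  rw [triT_expand hq hs hroot L a, triT_expand hq hs hroot L (a+1),
    ← Finset.sum_add_distrib]
  refine Finset.sum_congr rfl ?_
  intro n hn
  have hnL : n ≤ L := by
    have := Finset.mem_range.mp hn
    omega
  have hu1 : ((L:ℤ) - 2*n - (a+1)) * ((L:ℤ) - 2*n - (a+1) + 1)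
      = ((L:ℤ) - 2*n - a) * ((L:ℤ) - 2*n - a - 1) := by ring
  have hu2 : ((L:ℤ) - 2*n - a) * ((L:ℤ) - 2*n - a + 1)
      = ((L:ℤ) - 2*n - a) * ((L:ℤ) - 2*n - a - 1) + 2 * ((L:ℤ) - 2*n - a) := by ring
  rw [hu1, hu2, zpow_add₀ hs0, ← q_zpow_eq hs]
  have hM : (L:ℤ) - (n:ℤ) = ((L - n : ℕ) : ℤ) := by omega
  rw [hM, show (n:ℤ) + (a + 1) = (n:ℤ) + a + 1 by ring,
    qBinom_pascal1 hq hroot (L - n) ((n:ℤ) + a + 1),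
    show ((L - n : ℕ) : ℤ) + 1 - ((n:ℤ) + a + 1) = (L:ℤ) - 2*n - a by omega,
    show (n:ℤ) + a + 1 - 1 = (n:ℤ) + a by ring]
  ring

lemma qBinom_bounds {N k : ℤ} (h : qBinom N k q ≠ 0) : 0 ≤ k ∧ k ≤ N := by
  by_contra hc
  exact h (qBinom_eq_zero hc)

lemma core_identity (hq : q ≠ 0) (hs : s ^ 2 = q)
    (hroot : ∀ k : ℕ, 0 < k → q ^ k ≠ 1) (L : ℕ) (a : ℤ) :
    ∑ i ∈ Finset.range (L+1), s ^ ((i:ℤ) * ((i:ℤ) + 1)) * qBinom (L:ℤ) (i:ℤ) q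
        * (qTriT (-1) i a q s + qTriT (-1) i (a+1) q s)
      = s ^ (a * (a + 1)) * qBinom (2*(L:ℤ)+1) ((L:ℤ) - a) q := by
  have hs0 : s ≠ 0 := by intro h; rw [h] at hs; simp at hs; exact hq hs.symm
  calc
    ∑ i ∈ Finset.range (L+1), s ^ ((i:ℤ) * ((i:ℤ) + 1)) * qBinom (L:ℤ) (i:ℤ) q
        * (qTriT (-1) i a q s + qTriT (-1) i (a+1) q s)
      = ∑ i ∈ Finset.range (L+1), ∑ n ∈ Finset.range (L+1),
          s ^ ((i:ℤ)*((i:ℤ)+1) + ((i:ℤ)-2*(n:ℤ)-a) * ((i:ℤ)-2*(n:ℤ)-a-1))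
            * (qBinom (L:ℤ) (n:ℤ) q * qBinom ((L:ℤ)-(n:ℤ)) ((i:ℤ)-(n:ℤ)) q)
            * qBinom ((i:ℤ)-(n:ℤ)+1) ((n:ℤ)+a+1) q := by
        refine Finset.sum_congr rfl ?_
        intro i hi
        have hiL : i ≤ L := by
          have := Finset.mem_range.mp hi
          omega
        rw [tau_expand hq hs hroot i a]
        have hv : ∀ n : ℕ, i + 1 ≤ n →
            s ^ (((i:ℤ) - 2*(n:ℤ) - a) * ((i:ℤ) - 2*(n:ℤ) - a - 1)) * qBinom (i:ℤ) (n:ℤ) q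
              * qBinom ((i:ℤ) - (n:ℤ) + 1) ((n:ℤ) + a + 1) q = 0 := by
          intro n hn
          rw [qBinom_eq_zero (N := (i:ℤ)) (k := (n:ℤ)) (by omega)]
          ring
        rw [← sum_range_zero_ext (Nat.succ_le_succ hiL) hv, Finset.mul_sum]
        refine Finset.sum_congr rfl ?_
        intro n _
        have e := qBinom_split (q := q) hroot L (i:ℤ) (n:ℤ)
        have ez : s ^ ((i:ℤ)*((i:ℤ)+1)) * s ^ (((i:ℤ)-2*(n:ℤ)-a) * ((i:ℤ)-2*(n:ℤ)-a-1))
            = s ^ ((i:ℤ)*((i:ℤ)+1) + ((i:ℤ)-2*(n:ℤ)-a) * ((i:ℤ)-2*(n:ℤ)-a-1)) :=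
          (zpow_add₀ hs0 _ _).symm
        calc s ^ ((i:ℤ)*((i:ℤ)+1)) * qBinom (L:ℤ) (i:ℤ) q
              * (s ^ (((i:ℤ)-2*(n:ℤ)-a) * ((i:ℤ)-2*(n:ℤ)-a-1)) * qBinom (i:ℤ) (n:ℤ) q
                * qBinom ((i:ℤ)-(n:ℤ)+1) ((n:ℤ)+a+1) q)
            = (s ^ ((i:ℤ)*((i:ℤ)+1)) * s ^ (((i:ℤ)-2*(n:ℤ)-a) * ((i:ℤ)-2*(n:ℤ)-a-1)))
              * (qBinom (L:ℤ) (i:ℤ) q * qBinom (i:ℤ) (n:ℤ) q)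
              * qBinom ((i:ℤ)-(n:ℤ)+1) ((n:ℤ)+a+1) q := by ring
          _ = _ := by rw [ez, e]
    _ = ∑ n ∈ Finset.range (L+1), ∑ i ∈ Finset.range (L+1),
          s ^ ((i:ℤ)*((i:ℤ)+1) + ((i:ℤ)-2*(n:ℤ)-a) * ((i:ℤ)-2*(n:ℤ)-a-1))
            * (qBinom (L:ℤ) (n:ℤ) q * qBinom ((L:ℤ)-(n:ℤ)) ((i:ℤ)-(n:ℤ)) q)
            * qBinom ((i:ℤ)-(n:ℤ)+1) ((n:ℤ)+a+1) q := Finset.sum_comm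
    _ = ∑ n ∈ Finset.range (L+1), ∑ m ∈ Finset.range (L+1),
          s ^ (((m:ℤ)+(n:ℤ))*((m:ℤ)+(n:ℤ)+1) + ((m:ℤ)-(n:ℤ)-a) * ((m:ℤ)-(n:ℤ)-a-1))
            * (qBinom (L:ℤ) (n:ℤ) q * qBinom ((L:ℤ)-(n:ℤ)) (m:ℤ) q)
            * qBinom ((m:ℤ)+1) ((n:ℤ)+a+1) q := by
        refine Finset.sum_congr rfl ?_
        intro n _
        have hstep := sum_shift
          (f := fun m : ℤ => s ^ ((m+(n:ℤ))*(m+(n:ℤ)+1) + (m-(n:ℤ)-a) * (m-(n:ℤ)-a-1))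
            * (qBinom (L:ℤ) (n:ℤ) q * qBinom ((L:ℤ)-(n:ℤ)) m q)
            * qBinom (m+1) ((n:ℤ)+a+1) q) ((n:ℤ)) (L+1) (L+1) ?h1 ?h2
        case h1 =>
          intro k hk
          have hb : qBinom ((L:ℤ)-(n:ℤ)) k q ≠ 0 := by
            intro h0
            apply hk
            simp only [h0]
            ring
          have := qBinom_bounds hb
          omega
        case h2 =>
          intro k hk
          have hb : qBinom ((L:ℤ)-(n:ℤ)) k q ≠ 0 := by
            intro h0
            apply hk
            simp only [h0]
            ring
          have := qBinom_bounds hb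
          omega
        rw [← hstep]
        refine Finset.sum_congr rfl ?_
        intro i _
        show _ = s ^ (((i:ℤ)-(n:ℤ)+(n:ℤ))*((i:ℤ)-(n:ℤ)+(n:ℤ)+1)
            + ((i:ℤ)-(n:ℤ)-(n:ℤ)-a) * ((i:ℤ)-(n:ℤ)-(n:ℤ)-a-1))
            * (qBinom (L:ℤ) (n:ℤ) q * qBinom ((L:ℤ)-(n:ℤ)) ((i:ℤ)-(n:ℤ)) q)
            * qBinom ((i:ℤ)-(n:ℤ)+1) ((n:ℤ)+a+1) q
        rw [show ((i:ℤ)-(n:ℤ)+(n:ℤ))*((i:ℤ)-(n:ℤ)+(n:ℤ)+1)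
            + ((i:ℤ)-(n:ℤ)-(n:ℤ)-a) * ((i:ℤ)-(n:ℤ)-(n:ℤ)-a-1)
            = (i:ℤ)*((i:ℤ)+1) + ((i:ℤ)-2*(n:ℤ)-a) * ((i:ℤ)-2*(n:ℤ)-a-1) by ring]
    _ = ∑ m ∈ Finset.range (L+1), ∑ n ∈ Finset.range (L+1),
          (s ^ (a*(a+1) + 2*(m:ℤ)*(m:ℤ) - 2*a*(m:ℤ)) * qBinom (L:ℤ) (m:ℤ) q)
            * (q ^ ((n:ℤ)*((n:ℤ)+a+1)) * qBinom ((L:ℤ)-(m:ℤ)) (n:ℤ) q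
              * qBinom ((m:ℤ)+1) ((m:ℤ)-a-(n:ℤ)) q) := by
        rw [Finset.sum_comm]
        refine Finset.sum_congr rfl ?_
        intro m _
        refine Finset.sum_congr rfl ?_
        intro n _
        have e2 := qBinom_split2 (q := q) hroot L (n:ℤ) (m:ℤ)
        have esym : qBinom ((m:ℤ)+1) ((n:ℤ)+a+1) q = qBinom ((m:ℤ)+1) ((m:ℤ)-a-(n:ℤ)) q := by
          have h1 := qBinom_symm (q := q) (m+1) ((n:ℤ)+a+1)
          rw [show (((m+1:ℕ)):ℤ) = (m:ℤ)+1 by push_cast; ring] at h1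
          rw [h1, show (m:ℤ)+1-((n:ℤ)+a+1) = (m:ℤ)-a-(n:ℤ) by ring]
        have eexp : s ^ (((m:ℤ)+(n:ℤ))*((m:ℤ)+(n:ℤ)+1) + ((m:ℤ)-(n:ℤ)-a) * ((m:ℤ)-(n:ℤ)-a-1))
            = s ^ (a*(a+1) + 2*(m:ℤ)*(m:ℤ) - 2*a*(m:ℤ)) * q ^ ((n:ℤ)*((n:ℤ)+a+1)) := by
          rw [q_zpow_eq hs, ← zpow_add₀ hs0]
          congr 1
          ring
        rw [eexp, esym, e2]
        ring
    _ = ∑ m ∈ Finset.range (L+1),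
          (s ^ (a*(a+1) + 2*(m:ℤ)*(m:ℤ) - 2*a*(m:ℤ)) * qBinom (L:ℤ) (m:ℤ) q)
            * qBinom ((L:ℤ)+1) ((m:ℤ)-a) q := by
        refine Finset.sum_congr rfl ?_
        intro m hm
        have hmL : m ≤ L := by
          have := Finset.mem_range.mp hm
          omega
        rw [← Finset.mul_sum]
        congr 1
        have hv2 : ∀ n : ℕ, (L - m) + 1 ≤ n →
            q ^ ((n:ℤ)*((n:ℤ)+a+1)) * qBinom ((L:ℤ)-(m:ℤ)) (n:ℤ) q
              * qBinom ((m:ℤ)+1) ((m:ℤ)-a-(n:ℤ)) q = 0 := by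
          intro n hn
          rw [qBinom_eq_zero (N := (L:ℤ)-(m:ℤ)) (k := (n:ℤ)) (by omega)]
          ring
        rw [sum_range_zero_ext (by omega) hv2]
        have hV := qVandermonde hq hroot (L - m) (m + 1) ((m:ℤ) - a)
        rw [show ((L - m : ℕ):ℤ) + ((m+1:ℕ):ℤ) = (L:ℤ)+1 by push_cast; omega] at hV
        refine Eq.trans (Finset.sum_congr rfl ?_) hV.symm
        intro n _
        rw [show ((n:ℤ)) * (((m+1:ℕ):ℤ) - ((m:ℤ)-a) + (n:ℤ)) = (n:ℤ)*((n:ℤ)+a+1)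
            by push_cast; ring,
          show ((L-m:ℕ):ℤ) = (L:ℤ)-(m:ℤ) by omega,
          show ((m+1:ℕ):ℤ) = (m:ℤ)+1 by push_cast; ring]
    _ = s ^ (a * (a + 1)) * qBinom (2*(L:ℤ)+1) ((L:ℤ) - a) q := by
        have hV := qVandermonde hq hroot (L + 1) L ((L:ℤ) - a)
        rw [show ((L + 1 : ℕ):ℤ) + ((L:ℕ):ℤ) = 2*(L:ℤ)+1 by push_cast; ring] at hV
        rw [hV, Finset.mul_sum]
        have hstep := sum_shift
          (f := fun k : ℤ => s ^ (a*(a+1)) * (q ^ (k*((L:ℤ)-((L:ℤ)-a)+k))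
            * qBinom ((L+1:ℕ):ℤ) k q * qBinom (L:ℤ) ((L:ℤ)-a-k) q)) a (L+1) (L+1+1) ?g1 ?g2
        case g1 =>
          intro k hk
          have hb : qBinom (L:ℤ) ((L:ℤ)-a-k) q ≠ 0 := by
            intro h0
            apply hk
            simp only [h0]
            ring
          have := qBinom_bounds hb
          omega
        case g2 =>
          intro k hk
          have hb : qBinom ((L+1:ℕ):ℤ) k q ≠ 0 := by
            intro h0
            apply hk
            simp only [h0]
            ring
          have hb2 := qBinom_bounds hb
          have : ((L+1:ℕ):ℤ) = (L:ℤ)+1 := by push_cast; ring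
          omega
        rw [← hstep]
        refine Finset.sum_congr rfl ?_
        intro m _
        show _ = s ^ (a*(a+1)) * (q ^ (((m:ℤ)-a)*((L:ℤ)-((L:ℤ)-a)+((m:ℤ)-a)))
            * qBinom ((L+1:ℕ):ℤ) ((m:ℤ)-a) q * qBinom (L:ℤ) ((L:ℤ)-a-((m:ℤ)-a)) q)
        have esym2 : qBinom (L:ℤ) ((L:ℤ)-a-((m:ℤ)-a)) q = qBinom (L:ℤ) (m:ℤ) q := by
          rw [show (L:ℤ)-a-((m:ℤ)-a) = (L:ℤ)-(m:ℤ) by ring]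
          exact (qBinom_symm (q := q) L (m:ℤ)).symm
        have eexp2 : s ^ (a*(a+1) + 2*(m:ℤ)*(m:ℤ) - 2*a*(m:ℤ))
            = s ^ (a*(a+1)) * q ^ (((m:ℤ)-a)*((L:ℤ)-((L:ℤ)-a)+((m:ℤ)-a))) := by
          rw [q_zpow_eq hs, ← zpow_add₀ hs0]
          congr 1
          ring
        rw [esym2, eexp2, show ((L+1:ℕ):ℤ) = (L:ℤ)+1 by push_cast; ring]
        ring

end Work

theorem bailey_type_Tminus1 (q s : ℂ) (hs : s ^ 2 = q) (hq : q ≠ 0) (hroot : ∀ k : ℕ, 0 < k → q ^ k ≠ 1)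
    (α : ℤ → ℂ) (hα : (Function.support α).Finite)
    (F : ℕ → ℂ)
    (hF : ∀ L : ℕ, F L = ∑ᶠ a : ℤ, α a * (qTriT (-1) L a q s + qTriT (-1) L (a + 1) q s))
    (L : ℕ) :
    (∑' i : ℕ, q ^ ((i + 1) * i / 2) * qBinom (L : ℤ) (i : ℤ) q * F i) =
    ∑ᶠ a : ℤ, α a * q ^ ((a + 1) * a / 2) * qBinom (2 * (L : ℤ) + 1) ((L : ℤ) - a) q := by
  classical
  have hs0 : s ≠ 0 := by intro h; rw [h] at hs; simp at hs; exact hq hs.symm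
  have hsub : ∀ h : ℤ → ℂ, (∀ x, α x = 0 → h x = 0) →
      ∑ᶠ x, h x = ∑ x ∈ hα.toFinset, h x := by
    intro h hh
    apply finsum_eq_finset_sum_of_support_subset
    intro x hx
    rw [Set.Finite.coe_toFinset]
    intro hax
    exact hx (hh x hax)
  have hpow : ∀ i : ℕ, (q : ℂ) ^ ((i + 1) * i / 2) = s ^ ((i:ℤ) * ((i:ℤ) + 1)) := by
    intro i
    have hev : 2 ∣ (i + 1) * i := by
      rcases Nat.even_or_odd i with h | h
      · exact Dvd.dvd.mul_left h.two_dvd _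
      · exact Dvd.dvd.mul_right (Even.two_dvd (Odd.add_one h)) _
    calc (q : ℂ) ^ ((i + 1) * i / 2) = (s ^ 2) ^ ((i + 1) * i / 2) := by rw [hs]
      _ = s ^ (2 * ((i + 1) * i / 2)) := by rw [← pow_mul]
      _ = s ^ ((i + 1) * i) := by rw [Nat.mul_div_cancel' hev]
      _ = s ^ (((i + 1) * i : ℕ) : ℤ) := by rw [zpow_natCast]
      _ = s ^ ((i:ℤ) * ((i:ℤ) + 1)) := by
          congr 1
          push_cast
          ring
  have hqz : ∀ b : ℤ, (q : ℂ) ^ ((b + 1) * b / 2) = s ^ (b * (b + 1)) := by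
    intro b
    have hd : (2:ℤ) ∣ (b + 1) * b := by
      rw [mul_comm]
      exact (Int.even_mul_succ_self b).two_dvd
    rw [q_zpow_eq hs ((b + 1) * b / 2), Int.mul_ediv_cancel' hd,
      show (b + 1) * b = b * (b + 1) by ring]
  rw [tsum_eq_sum (s := Finset.range (L+1)) ?van]
  case van =>
    intro i hi
    have hi' : L + 1 ≤ i := by simpa using hi
    rw [qBinom_eq_zero (N := (L:ℤ)) (k := (i:ℤ)) (by omega)]
    ring
  calc ∑ i ∈ Finset.range (L+1), q ^ ((i + 1) * i / 2) * qBinom (L : ℤ) (i : ℤ) q * F i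
      = ∑ i ∈ Finset.range (L+1), ∑ b ∈ hα.toFinset,
          α b * (s ^ ((i:ℤ) * ((i:ℤ) + 1)) * qBinom (L:ℤ) (i:ℤ) q
            * (qTriT (-1) i b q s + qTriT (-1) i (b+1) q s)) := by
        refine Finset.sum_congr rfl ?_
        intro i _
        rw [hF i, hpow i,
          hsub (fun b => α b * (qTriT (-1) i b q s + qTriT (-1) i (b+1) q s))
            (fun x hx => by simp [hx]), Finset.mul_sum]
        refine Finset.sum_congr rfl ?_
        intro b _
        ring
    _ = ∑ b ∈ hα.toFinset, α b * ∑ i ∈ Finset.range (L+1),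
          s ^ ((i:ℤ) * ((i:ℤ) + 1)) * qBinom (L:ℤ) (i:ℤ) q
            * (qTriT (-1) i b q s + qTriT (-1) i (b+1) q s) := by
        rw [Finset.sum_comm]
        refine Finset.sum_congr rfl ?_
        intro b _
        rw [Finset.mul_sum]
    _ = ∑ b ∈ hα.toFinset, α b * (s ^ (b*(b+1)) * qBinom (2*(L:ℤ)+1) ((L:ℤ)-b) q) := by
        refine Finset.sum_congr rfl ?_
        intro b _
        rw [core_identity hq hs hroot L b]
    _ = ∑ᶠ a : ℤ, α a * q ^ ((a + 1) * a / 2) * qBinom (2 * (L : ℤ) + 1) ((L : ℤ) - a) q := by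
        rw [hsub (fun b => α b * q ^ ((b + 1) * b / 2) * qBinom (2 * (L : ℤ) + 1) ((L : ℤ) - b) q)
          (fun x hx => by simp [hx])]
        refine Finset.sum_congr rfl ?_
        intro b _
        rw [hqz b]
        ring
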